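/- Let 𝒲 = (w_{ij}) ∈ 𝒮^{r×n}, x ∈ ℝⁿ, and y ∈ ℝʳ. The following are equivalent: (i) there exists B ∈ Q(𝒲) such that y = Bx; (ii) for every i ∈ [r]: if y_i ≠ 0, then sign(y_i) = s · sign(x_j) for some j ∈ [n] and some s ∈ w_{ij}; and if y_i = 0, then w_{i*} · σ(x) = 0, i.e. there exists a sign vector τ ∈ {−,0,+}ⁿ with τ_j ∈ w_{ij} for all j such that τ is orthogonal to σ(x). -/

import Mathlib

/-- Two sign vectors `τ, ρ` are orthogonal (`τ · ρ = 0`): either `τᵢ ρᵢ = 0` for all `i`,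
or there exist `i, j` with `τᵢ ρᵢ = -` and `τⱼ ρⱼ = +`. -/
def sOrth {n : ℕ} (τ ρ : Fin n → SignType) : Prop :=
  (∀ i, τ i * ρ i = 0) ∨ (∃ i j, τ i * ρ i = -1 ∧ τ j * ρ j = 1)

lemma signCoe (s : SignType) : SignType.sign ((s:ℝ)) = s := by cases s <;> simp

lemma absCoe (s : SignType) : |(s:ℝ)| ≤ 1 := by cases s <;> simp

lemma solvePos (u v R : ℝ) (hu : u < 0) (hv : 0 < v) :
    ∃ a b : ℝ, 0 < a ∧ 0 < b ∧ a*u + b*v = R := by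
  have hune : u ≠ 0 := ne_of_lt hu
  have hvne : v ≠ 0 := ne_of_gt hv
  refine ⟨((|R|+1) - R)/(-u), (|R|+1)/v, ?_, ?_, ?_⟩
  · apply div_pos
    · have := le_abs_self R; linarith
    · linarith
  · apply div_pos
    · have := abs_nonneg R; linarith
    · exact hv
  · rw [div_mul_eq_mul_div, div_mul_eq_mul_div, div_add_div _ _ (neg_ne_zero.mpr hune) hvne]
    field_simp
    ring

lemma rowZero {n : ℕ} (w : Fin n → Set SignType) (x : Fin n → ℝ)
    (τ : Fin n → SignType) (hτ : ∀ j, τ j ∈ w j)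
    (horth : sOrth τ (fun j => SignType.sign (x j))) :
    ∃ b : Fin n → ℝ, (∀ j, SignType.sign (b j) ∈ w j) ∧ (0:ℝ) = ∑ j, b j * x j := by
  rcases horth with hall | ⟨p, q, hp, hq⟩
  · refine ⟨fun j => (τ j : ℝ), fun j => by rw [signCoe]; exact hτ j, ?_⟩
    have : ∀ j, (τ j : ℝ) * x j = 0 := by
      intro j
      rcases mul_eq_zero.mp (hall j) with h | h
      · simp [h]
      · simp [sign_eq_zero_iff.mp h]
    simp [this]
  · have hpq : p ≠ q := by
      intro h; rw [h, hq] at hp; exact absurd hp (by decide)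
    have hu : (τ p : ℝ) * x p < 0 := by
      have : SignType.sign ((τ p : ℝ) * x p) = -1 := by
        rw [sign_mul, signCoe]; exact hp
      exact sign_eq_neg_one_iff.mp this
    have hv : (0:ℝ) < (τ q : ℝ) * x q := by
      have : SignType.sign ((τ q : ℝ) * x q) = 1 := by
        rw [sign_mul, signCoe]; exact hq
      exact sign_eq_one_iff.mp this
    set u := (τ p : ℝ) * x p with hudef
    set v := (τ q : ℝ) * x q with hvdef
    set T := ∑ j, (τ j : ℝ) * x j with hTdef
    obtain ⟨a, b', ha, hb, hab⟩ := solvePos u v (u + v - T) hu hv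
    refine ⟨fun k => if k = p then a * (τ p : ℝ) else if k = q then b' * (τ q : ℝ)
        else (τ k : ℝ), ?_, ?_⟩
    · intro j
      by_cases h1 : j = p
      · subst h1; simp only [if_pos rfl, if_true, eq_self_iff_true]
        rw [sign_mul, sign_pos ha, one_mul, signCoe]; exact hτ j
      · by_cases h2 : j = q
        · subst h2; simp only [if_neg h1, if_pos rfl, if_true, eq_self_iff_true]
          rw [sign_mul, sign_pos hb, one_mul, signCoe]; exact hτ j
        · simp only [if_neg h1, if_neg h2]
          rw [signCoe]; exact hτ j
    · have key : ∀ k, (if k = p then a * (τ p : ℝ) else if k = q then b' * (τ q : ℝ)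
          else (τ k : ℝ)) * x k
          = (τ k : ℝ) * x k + (if k = p then (a-1)*u else 0)
            + (if k = q then (b'-1)*v else 0) := by
        intro k
        by_cases h1 : k = p
        · subst h1
          simp only [if_pos rfl, if_neg hpq, if_true, eq_self_iff_true, hudef]
          ring
        · by_cases h2 : k = q
          · subst h2
            simp only [if_neg h1, if_pos rfl, if_true, eq_self_iff_true, hvdef]
            ring
          · simp [h1, h2]
      rw [Finset.sum_congr rfl (fun k _ => key k)]
      rw [Finset.sum_add_distrib, Finset.sum_add_distrib]
      rw [Finset.sum_ite_eq' Finset.univ p (fun _ => (a-1)*u),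
          Finset.sum_ite_eq' Finset.univ q (fun _ => (b'-1)*v)]
      simp only [Finset.mem_univ, if_pos]
      rw [← hTdef]
      linarith

lemma rowNonzero {n : ℕ} (w : Fin n → Set SignType) (hw : ∀ j, (w j).Nonempty)
    (x : Fin n → ℝ) (c : ℝ) (hc : c ≠ 0)
    (h : ∃ j, ∃ s ∈ w j, SignType.sign c = s * SignType.sign (x j)) :
    ∃ b : Fin n → ℝ, (∀ j, SignType.sign (b j) ∈ w j) ∧ c = ∑ j, b j * x j := by
  obtain ⟨j₀, s, hs, hsign⟩ := h
  choose t ht using hw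
  set D := ∑ k, |x k| with hD
  have hD0 : 0 ≤ D := Finset.sum_nonneg fun k _ => abs_nonneg _
  set δ := |c| / (2 * (1 + D)) with hδdef
  have hδ : 0 < δ := div_pos (abs_pos.mpr hc) (by linarith)
  set E := ∑ k, (if k = j₀ then (0:ℝ) else δ * (t k : ℝ) * x k) with hE
  have hEbound : |E| ≤ δ * D := by
    calc |E| ≤ ∑ k, |if k = j₀ then (0:ℝ) else δ * (t k : ℝ) * x k| :=
          Finset.abs_sum_le_sum_abs _ _
      _ ≤ ∑ k, δ * |x k| := by
          apply Finset.sum_le_sum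
          intro k _
          split
          · simp; positivity
          · rw [abs_mul, abs_mul, abs_of_pos hδ]
            calc δ * |(t k : ℝ)| * |x k| ≤ δ * 1 * |x k| := by
                  gcongr
                  exact absCoe (t k)
              _ = δ * |x k| := by ring
      _ = δ * D := by rw [hD, Finset.mul_sum]
  have hδD : δ * D < |c| := by
    rw [hδdef, div_mul_eq_mul_div, div_lt_iff₀ (by linarith : (0:ℝ) < 2 * (1 + D))]
    have := abs_pos.mpr hc
    nlinarith
  have hElt : |E| < |c| := lt_of_le_of_lt hEbound hδD
  -- sign facts
  have hcE : SignType.sign (c - E) = SignType.sign c := by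
    rcases lt_or_gt_of_ne hc with h0 | h0
    · have : c - E < 0 := by
        have := neg_abs_le E
        have := abs_lt.mp hElt
        rw [abs_of_neg h0] at hElt
        have := abs_lt.mp hElt
        linarith
      rw [sign_neg this, sign_neg h0]
    · have : 0 < c - E := by
        rw [abs_of_pos h0] at hElt
        have := abs_lt.mp hElt
        linarith
      rw [sign_pos this, sign_pos h0]
  have hsx : SignType.sign ((s : ℝ) * x j₀) = SignType.sign c := by
    rw [sign_mul, signCoe, hsign]
  have hsx0 : (s : ℝ) * x j₀ ≠ 0 := by
    intro h0
    rw [h0, sign_zero] at hsx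
    exact hc (sign_eq_zero_iff.mp hsx.symm)
  set m := (c - E) / ((s : ℝ) * x j₀) with hm
  have hmpos : 0 < m := by
    rcases lt_or_gt_of_ne hc with h0 | h0
    · have h1 : c - E < 0 := sign_eq_neg_one_iff.mp (by rw [hcE, sign_neg h0])
      have h2 : (s : ℝ) * x j₀ < 0 := sign_eq_neg_one_iff.mp (by rw [hsx, sign_neg h0])
      exact div_pos_of_neg_of_neg h1 h2
    · have h1 : 0 < c - E := sign_eq_one_iff.mp (by rw [hcE, sign_pos h0])
      have h2 : 0 < (s : ℝ) * x j₀ := sign_eq_one_iff.mp (by rw [hsx, sign_pos h0])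
      exact div_pos h1 h2
  refine ⟨fun k => if k = j₀ then m * (s : ℝ) else δ * (t k : ℝ), ?_, ?_⟩
  · intro j
    by_cases h1 : j = j₀
    · subst h1
      simp only [if_pos rfl, if_true, eq_self_iff_true]
      rw [sign_mul, sign_pos hmpos, one_mul, signCoe]
      exact hs
    · simp only [if_neg h1]
      rw [sign_mul, sign_pos hδ, one_mul, signCoe]
      exact ht j
  · have key : ∀ k, (if k = j₀ then m * (s : ℝ) else δ * (t k : ℝ)) * x k
        = (if k = j₀ then m * ((s:ℝ) * x j₀) else 0)
          + (if k = j₀ then (0:ℝ) else δ * (t k : ℝ) * x k) := by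
      intro k
      by_cases h1 : k = j₀
      · subst h1; simp only [if_pos rfl, if_true, eq_self_iff_true]; ring
      · simp only [if_neg h1]; ring
    rw [Finset.sum_congr rfl (fun k _ => key k), Finset.sum_add_distrib,
        Finset.sum_ite_eq' Finset.univ j₀ (fun _ => m * ((s:ℝ) * x j₀)), ← hE]
    simp only [Finset.mem_univ, if_pos]
    rw [hm, div_mul_cancel₀ _ hsx0]
    ring

lemma rowForward {n : ℕ} (w : Fin n → Set SignType) (x : Fin n → ℝ) (b : Fin n → ℝ)
    (hb : ∀ j, SignType.sign (b j) ∈ w j) (c : ℝ) (hc : c = ∑ j, b j * x j) :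
    (c ≠ 0 → ∃ j, ∃ s ∈ w j, SignType.sign c = s * SignType.sign (x j)) ∧
    (c = 0 → ∃ τ : Fin n → SignType, (∀ j, τ j ∈ w j) ∧
      sOrth τ (fun j => SignType.sign (x j))) := by
  constructor
  · intro hne
    rcases lt_or_gt_of_ne hne with h0 | h0
    · have : ∃ j, b j * x j < 0 := by
        by_contra hcon
        push_neg at hcon
        have : 0 ≤ ∑ j, b j * x j := Finset.sum_nonneg fun j _ => hcon j
        rw [← hc] at this; linarith
      obtain ⟨j, hj⟩ := this
      refine ⟨j, SignType.sign (b j), hb j, ?_⟩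
      rw [sign_neg h0, ← sign_mul, sign_neg hj]
    · have : ∃ j, 0 < b j * x j := by
        by_contra hcon
        push_neg at hcon
        have : ∑ j, b j * x j ≤ 0 := Finset.sum_nonpos fun j _ => hcon j
        rw [← hc] at this; linarith
      obtain ⟨j, hj⟩ := this
      refine ⟨j, SignType.sign (b j), hb j, ?_⟩
      rw [sign_pos h0, ← sign_mul, sign_pos hj]
  · intro h0
    refine ⟨fun j => SignType.sign (b j), hb, ?_⟩
    by_cases hall : ∀ j, b j * x j = 0
    · left
      intro j
      simp only [← sign_mul, hall j, sign_zero]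
    · right
      push_neg at hall
      obtain ⟨p, hp⟩ := hall
      rcases lt_or_gt_of_ne hp with hneg | hpos
      · have : ∃ q, 0 < b q * x q := by
          by_contra hcon
          push_neg at hcon
          have h1 : ∑ j, b j * x j < ∑ _j : Fin n, (0:ℝ) :=
            Finset.sum_lt_sum (fun j _ => hcon j) ⟨p, Finset.mem_univ p, hneg⟩
          rw [Finset.sum_const_zero, ← hc, h0] at h1; linarith
        obtain ⟨q, hq⟩ := this
        exact ⟨p, q, by simp only [← sign_mul]; exact sign_neg hneg,
          by simp only [← sign_mul]; exact sign_pos hq⟩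
      · have : ∃ q, b q * x q < 0 := by
          by_contra hcon
          push_neg at hcon
          have h1 : ∑ _j : Fin n, (0:ℝ) < ∑ j, b j * x j :=
            Finset.sum_lt_sum (fun j _ => hcon j) ⟨p, Finset.mem_univ p, hpos⟩
          rw [Finset.sum_const_zero, ← hc, h0] at h1; linarith
        obtain ⟨q, hq⟩ := this
        exact ⟨q, p, by simp only [← sign_mul]; exact sign_neg hq,
          by simp only [← sign_mul]; exact sign_pos hpos⟩

/-- Characterization of the pairs `(x, y)` with `y = B x` for some matrix `B` in the
qualitative class `Q(𝒲)` of a matrix `𝒲` of non-empty sets of signs. -/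
theorem stmt17 {n r : ℕ} (𝒲 : Matrix (Fin r) (Fin n) (Set SignType))
    (h𝒲 : ∀ i j, (𝒲 i j).Nonempty) (x : Fin n → ℝ) (y : Fin r → ℝ) :
    (∃ B : Matrix (Fin r) (Fin n) ℝ,
        (∀ i j, SignType.sign (B i j) ∈ 𝒲 i j) ∧ y = B.mulVec x) ↔
    (∀ i : Fin r,
      (y i ≠ 0 → ∃ j : Fin n, ∃ s ∈ 𝒲 i j,
        SignType.sign (y i) = s * SignType.sign (x j)) ∧
      (y i = 0 → ∃ τ : Fin n → SignType, (∀ j, τ j ∈ 𝒲 i j) ∧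
        sOrth τ (fun j => SignType.sign (x j)))) := by
  constructor
  · rintro ⟨B, hB, hy⟩ i
    have hyi : y i = ∑ j, B i j * x j := by
      rw [hy, Matrix.mulVec, dotProduct]
    exact rowForward (𝒲 i) x (B i) (hB i) (y i) hyi
  · intro h
    have hrow : ∀ i, ∃ b : Fin n → ℝ,
        (∀ j, SignType.sign (b j) ∈ 𝒲 i j) ∧ y i = ∑ j, b j * x j := by
      intro i
      by_cases hc : y i = 0
      · obtain ⟨τ, hτ, horth⟩ := (h i).2 hc
        rw [hc]
        exact rowZero (𝒲 i) x τ hτ horth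
      · exact rowNonzero (𝒲 i) (h𝒲 i) x (y i) hc ((h i).1 hc)
    choose B hB1 hB2 using hrow
    refine ⟨fun i => B i, fun i j => hB1 i j, ?_⟩
    funext i
    show y i = ∑ j, B i j * x j
    exact hB2 i
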